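/- Let J ⊂ I ⊂ S be monomial ideals of S and let D : I/J = ⊕_{i=1}^r u_i K[Z_i] be a Stanley decomposition of I/J. Then D_f : (I/J)_f = ⊕_{i∈C} ⊕_{L⊆A} u_i f_L^{-1} K[Z_i^L] is a Stanley decomposition of the localization (I/J)_f, where C = {i : {x_j : j ∈ A} ⊆ Z_i}, f_L = ∏_{l∈L} x_l, and Z_i^L = {x_l^{-1} : l ∈ L, x_l ∈ Z_i} ∪ {x_l : l ∉ L, x_l ∈ Z_i}. -/

import Mathlib

/-!
Combinatorial model of the localized polynomial ring `S_f`, where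
`S = K[x_1, …, x_n]`, `A ⊆ {1, …, n}` and `f = ∏_{j ∈ A} x_j`.

Since all the `ℤⁿ`-graded components of `S_f` are at most one-dimensional over `K`,
monomial `K`-subspaces of `S_f` (in particular monomial ideals, Stanley spaces and
modules `I/J`) are faithfully encoded by their sets of exponent vectors `a : Fin n → ℤ`,
direct sum decompositions into monomial subspaces correspond exactly to partitions of
the exponent sets, and (for those sets `Z` considered here) `u·K[Z]` is automatically a
free `K[Z]`-module.
-/

/-- Exponent vectors of the monomials of `S_f`: all `a : ℤⁿ` with `a j ≥ 0` for `j ∉ A`. -/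
def SfMon {n : ℕ} (A : Finset (Fin n)) : Set (Fin n → ℤ) :=
  {a | ∀ j, j ∉ A → 0 ≤ a j}

/-- `M` is the set of exponent vectors of the monomials of a monomial ideal of `S_f`
(for `A = ∅` this is a monomial ideal of the polynomial ring `S` itself). -/
def IsMonomialIdeal {n : ℕ} (A : Finset (Fin n)) (M : Set (Fin n → ℤ)) : Prop :=
  M ⊆ SfMon A ∧ ∀ a ∈ M, ∀ c ∈ SfMon A, a + c ∈ M

/-- Admissible sets of "variables" for Stanley spaces in `S_f`: `(i, true)` stands for
`x i` and `(i, false)` for `x i⁻¹`; inverse variables exist only for `i ∈ A`, and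
`{x i, x i⁻¹} ⊄ Z`. -/
def ZOk {n : ℕ} (A : Finset (Fin n)) (Z : Finset (Fin n × Bool)) : Prop :=
  (∀ i : Fin n, (i, false) ∈ Z → i ∈ A) ∧
  ∀ i : Fin n, ¬((i, true) ∈ Z ∧ (i, false) ∈ Z)

/-- Exponent vectors of the monomials of the Stanley space `u·K[Z]`. -/
def stanleySet {n : ℕ} (u : Fin n → ℤ) (Z : Finset (Fin n × Bool)) : Set (Fin n → ℤ) :=
  {a | ∀ i : Fin n, ((i, true) ∈ Z → u i ≤ a i) ∧ ((i, false) ∈ Z → a i ≤ u i) ∧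
      ((i, true) ∉ Z → (i, false) ∉ Z → a i = u i)}

/-- The family of Stanley spaces `u i · K[Z i]` is a Stanley decomposition of the
monomial `K`-vector space whose monomials have exponent vectors in `M`. -/
def IsStanleyDecompOn {n : ℕ} (A : Finset (Fin n)) (M : Set (Fin n → ℤ)) {ι : Type}
    (u : ι → Fin n → ℤ) (Z : ι → Finset (Fin n × Bool)) : Prop :=
  Finite ι ∧ (∀ i, ZOk A (Z i)) ∧
  Pairwise (fun i j : ι => Disjoint (stanleySet (u i) (Z i)) (stanleySet (u j) (Z j))) ∧
  (⋃ i, stanleySet (u i) (Z i)) = M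

/-- Stanley depth of the monomial `K`-space with exponent set `M` (value `⊤` for `M = ∅`). -/
noncomputable def sdepth {n : ℕ} (A : Finset (Fin n)) (M : Set (Fin n → ℤ)) : ℕ∞ :=
  sSup {k : ℕ∞ | ∃ (r : ℕ) (u : Fin r → Fin n → ℤ) (Z : Fin r → Finset (Fin n × Bool)),
    IsStanleyDecompOn A M u Z ∧ ∀ i, k ≤ ((Z i).card : ℕ∞)}

/-- The exponent vector of `f = ∏_{j ∈ A} x_j`. -/
def fVec {n : ℕ} (A : Finset (Fin n)) : Fin n → ℤ := fun i => if i ∈ A then 1 else 0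

/-- Localization at `f` of a monomial ideal (given by its set of exponent vectors). -/
def locSet {n : ℕ} (A : Finset (Fin n)) (M : Set (Fin n → ℤ)) : Set (Fin n → ℤ) :=
  {b ∈ SfMon A | ∃ k : ℕ, b + (k : ℤ) • fVec A ∈ M}

/-- `|a| = Σ_i |a_i|`, the degree used for the Hilbert series. -/
def degAbs {n : ℕ} (a : Fin n → ℤ) : ℕ := ∑ i, (a i).natAbs

/-- The Hilbert series `H_M(t) = Σ_d H(M,d) t^d`, `H(M,d) = #{a ∈ M : |a| = d}`, of the
`ℤⁿ`-graded `K`-vector space with monomial exponent set `M`. -/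
noncomputable def hilbSeries {n : ℕ} (M : Set (Fin n → ℤ)) : PowerSeries ℚ :=
  PowerSeries.mk fun d => (({a ∈ M | degAbs a = d}).ncard : ℚ)

/-- A prime filtration `J = N 0 ⊂ N 1 ⊂ … ⊂ N r = I` of `I/J` by monomial ideals of `S_f`,
with `i`-th factor isomorphic, as a `ℤⁿ`-graded module, to `(S_f/P_{B i})(-a i)`, where
`P_B` is the monomial prime ideal generated by the variables `x j`, `j ∈ B`. -/
def IsPrimeFiltration {n : ℕ} (A : Finset (Fin n)) (J I : Set (Fin n → ℤ)) (r : ℕ)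
    (N : Fin (r + 1) → Set (Fin n → ℤ)) (B : Fin r → Finset (Fin n))
    (a : Fin r → Fin n → ℤ) : Prop :=
  N 0 = J ∧ N (Fin.last r) = I ∧
  (∀ i : Fin (r + 1), IsMonomialIdeal A (N i)) ∧
  (∀ i : Fin r, N i.castSucc ⊂ N i.succ) ∧
  (∀ i : Fin r, ∀ j ∈ A, j ∉ B i) ∧
  (∀ i : Fin r, ∀ j, 0 ≤ a i j) ∧
  (∀ i : Fin r, ∀ j ∈ A, a i j = 0) ∧
  (∀ i : Fin r, N i.succ \ N i.castSucc =
    {b | ∃ c ∈ SfMon A, (∀ j ∈ B i, c j = 0) ∧ b = a i + c})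

/-- `fdepth` of `I/J` (value `⊤` for `I = J`); `dim S_f/P_B = n - |B|`. -/
noncomputable def fdepth {n : ℕ} (A : Finset (Fin n)) (J I : Set (Fin n → ℤ)) : ℕ∞ :=
  sSup {k : ℕ∞ | ∃ (r : ℕ) (N : Fin (r + 1) → Set (Fin n → ℤ)) (B : Fin r → Finset (Fin n))
      (a : Fin r → Fin n → ℤ), IsPrimeFiltration A J I r N B a ∧
      ∀ i, k ≤ ((n - (B i).card : ℕ) : ℕ∞)}

/-- The set of exponent vectors of the monomials of the colon ideal `(J :_{S_f} I)`,
which is the annihilator of `I/J`. -/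
def colonSet {n : ℕ} (A : Finset (Fin n)) (I J : Set (Fin n → ℤ)) : Set (Fin n → ℤ) :=
  {c ∈ SfMon A | ∀ a ∈ I, a + c ∈ J}

/-- The monomial prime `P_B·S_f` contains the monomial ideal with exponent set `Q`. -/
def primeContainsIdeal {n : ℕ} (B : Finset (Fin n)) (Q : Set (Fin n → ℤ)) : Prop :=
  ∀ c ∈ Q, ∃ j ∈ B, 1 ≤ c j

/-- `P_B·S_f` is a minimal prime ideal of the module `I/J`, i.e. a prime of `S_f`
(so `B ∩ A = ∅`) minimal among those containing `ann(I/J) = (J : I)`. -/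
def IsMinimalPrimeOf {n : ℕ} (A B : Finset (Fin n)) (I J : Set (Fin n → ℤ)) : Prop :=
  (∀ j ∈ A, j ∉ B) ∧ primeContainsIdeal B (colonSet A I J) ∧
  ∀ B' ⊆ B, primeContainsIdeal B' (colonSet A I J) → B' = B

lemma exists_bound {n : ℕ} (A : Finset (Fin n)) (v b : Fin n → ℤ) :
    ∃ k : ℕ, ∀ j ∈ A, v j ≤ b j + (k : ℤ) := by
  refine ⟨A.sup fun j => (v j - b j).toNat, fun j hj => ?_⟩
  have h1 : v j - b j ≤ ((v j - b j).toNat : ℤ) := Int.self_le_toNat _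
  have h3 : (((v j - b j).toNat : ℕ) : ℤ) ≤ ((A.sup fun j => (v j - b j).toNat : ℕ) : ℤ) :=
    Int.ofNat_le.mpr (Finset.le_sup (f := fun j => (v j - b j).toNat) hj)
  linarith

lemma bound_mono {n : ℕ} {A : Finset (Fin n)} {v b : Fin n → ℤ} {k k' : ℕ}
    (h : ∀ j ∈ A, v j ≤ b j + (k : ℤ)) (hk : k ≤ k') : ∀ j ∈ A, v j ≤ b j + (k' : ℤ) := by
  intro j hj
  have h2 : (k : ℤ) ≤ (k' : ℤ) := by exact_mod_cast hk
  linarith [h j hj]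

lemma mem_imageZ {n : ℕ} {Z : Finset (Fin n × Bool)} (hZf : ∀ i : Fin n, (i, false) ∉ Z)
    (L : Finset (Fin n)) (j : Fin n) (t : Bool) :
    (j, t) ∈ Z.image (fun q => (q.1, decide (q.1 ∉ L))) ↔
      (j, true) ∈ Z ∧ t = decide (j ∉ L) := by
  constructor
  · intro h
    obtain ⟨⟨a, c⟩, hq, heq⟩ := Finset.mem_image.mp h
    obtain ⟨rfl, rfl⟩ : a = j ∧ decide (a ∉ L) = t := by simpa [Prod.ext_iff] using heq
    cases c with
    | false => exact absurd hq (hZf a)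
    | true => exact ⟨hq, rfl⟩
  · rintro ⟨h1, rfl⟩
    exact Finset.mem_image.mpr ⟨(j, true), h1, rfl⟩

lemma lemA {n : ℕ} {A : Finset (Fin n)} {u b : Fin n → ℤ} {Z : Finset (Fin n × Bool)}
    {L : Finset (Fin n)} (hZf : ∀ j : Fin n, (j, false) ∉ Z)
    (hA : ∀ j ∈ A, (j, true) ∈ Z) (hL : L ⊆ A)
    (hb : b ∈ stanleySet (fun j => u j - if j ∈ L then 1 else 0)
        (Z.image fun q => (q.1, decide (q.1 ∉ L))))
    (k : ℕ) (hk : ∀ j ∈ A, u j ≤ b j + (k : ℤ)) :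
    b + (k : ℤ) • fVec A ∈ stanleySet u Z := by
  simp only [stanleySet, Set.mem_setOf_eq] at hb ⊢
  intro j
  have hbj := hb j
  refine ⟨?_, ?_, ?_⟩
  · intro hjZ
    by_cases hjA : j ∈ A
    · have heq : (b + (k : ℤ) • fVec A) j = b j + (k : ℤ) := by simp [fVec, hjA]
      rw [heq]; exact hk j hjA
    · have hjL : j ∉ L := fun h => hjA (hL h)
      have h1 : (j, true) ∈ Z.image (fun q => (q.1, decide (q.1 ∉ L))) :=
        (mem_imageZ hZf L j true).mpr ⟨hjZ, by simp [hjL]⟩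
      have h2 := hbj.1 h1
      simp only [if_neg hjL, sub_zero] at h2
      have heq : (b + (k : ℤ) • fVec A) j = b j := by simp [fVec, hjA]
      rw [heq]; exact h2
  · intro hjZ; exact absurd hjZ (hZf j)
  · intro h1 h2
    have hjA : j ∉ A := fun h => h1 (hA j h)
    have hjL : j ∉ L := fun h => hjA (hL h)
    have hnot : (j, true) ∉ Z.image (fun q => (q.1, decide (q.1 ∉ L))) := by
      intro h; exact h1 ((mem_imageZ hZf L j true).mp h).1
    have hnot' : (j, false) ∉ Z.image (fun q => (q.1, decide (q.1 ∉ L))) := by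
      intro h; exact h1 ((mem_imageZ hZf L j false).mp h).1
    have h3 := (hbj.2.2) hnot hnot'
    simp only [if_neg hjL, sub_zero] at h3
    have heq : (b + (k : ℤ) • fVec A) j = b j := by simp [fVec, hjA]
    rw [heq, h3]

lemma lemB {n : ℕ} {A : Finset (Fin n)} {u b : Fin n → ℤ} {Z : Finset (Fin n × Bool)}
    (hZf : ∀ j : Fin n, (j, false) ∉ Z) (hA : ∀ j ∈ A, (j, true) ∈ Z) (k : ℕ)
    (ha : b + (k : ℤ) • fVec A ∈ stanleySet u Z) :
    b ∈ stanleySet (fun j => u j - if j ∈ A.filter (fun l => b l < u l) then 1 else 0)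
        (Z.image fun q => (q.1, decide (q.1 ∉ A.filter (fun l => b l < u l)))) := by
  set L := A.filter (fun l => b l < u l) with hLdef
  have hL : L ⊆ A := Finset.filter_subset _ _
  simp only [stanleySet, Set.mem_setOf_eq] at ha ⊢
  intro j
  have haj := ha j
  refine ⟨?_, ?_, ?_⟩
  · intro hj
    obtain ⟨hjZ, hdec⟩ := (mem_imageZ hZf L j true).mp hj
    have hjL : j ∉ L := by simpa using hdec.symm
    simp only [if_neg hjL, sub_zero]
    by_cases hjA : j ∈ A
    · have hnlt : ¬ b j < u j := fun hlt => hjL (Finset.mem_filter.mpr ⟨hjA, hlt⟩)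
      linarith
    · have h2 := haj.1 hjZ
      have heq : (b + (k : ℤ) • fVec A) j = b j := by simp [fVec, hjA]
      rw [heq] at h2; exact h2
  · intro hj
    obtain ⟨hjZ, hdec⟩ := (mem_imageZ hZf L j false).mp hj
    have hjL : j ∈ L := by simpa using hdec.symm
    have hlt : b j < u j := (Finset.mem_filter.mp hjL).2
    simp only [if_pos hjL]
    linarith
  · intro h1 h2
    have hjZ : (j, true) ∉ Z := by
      intro hz
      by_cases hjL : j ∈ L
      · exact h2 ((mem_imageZ hZf L j false).mpr ⟨hz, by simp [hjL]⟩)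
      · exact h1 ((mem_imageZ hZf L j true).mpr ⟨hz, by simp [hjL]⟩)
    have hjA : j ∉ A := fun h => hjZ (hA j h)
    have hjL : j ∉ L := fun h => hjA (hL h)
    have h3 := haj.2.2 hjZ (hZf j)
    have heq : (b + (k : ℤ) • fVec A) j = b j := by simp [fVec, hjA]
    rw [heq] at h3
    simp only [if_neg hjL, sub_zero]
    exact h3

lemma lemC {n : ℕ} {A : Finset (Fin n)} {u b : Fin n → ℤ} {Z : Finset (Fin n × Bool)}
    {L : Finset (Fin n)} (hZf : ∀ j : Fin n, (j, false) ∉ Z)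
    (hA : ∀ j ∈ A, (j, true) ∈ Z) (hL : L ⊆ A)
    (hb : b ∈ stanleySet (fun j => u j - if j ∈ L then 1 else 0)
        (Z.image fun q => (q.1, decide (q.1 ∉ L)))) :
    L = A.filter (fun l => b l < u l) := by
  simp only [stanleySet, Set.mem_setOf_eq] at hb
  ext j
  simp only [Finset.mem_filter]
  constructor
  · intro hjL
    have hjA : j ∈ A := hL hjL
    have hf : (j, false) ∈ Z.image (fun q => (q.1, decide (q.1 ∉ L))) :=
      (mem_imageZ hZf L j false).mpr ⟨hA j hjA, by simp [hjL]⟩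
    have h2 := (hb j).2.1 hf
    simp only [if_pos hjL] at h2
    exact ⟨hjA, by linarith⟩
  · rintro ⟨hjA, hlt⟩
    by_contra hjL
    have ht : (j, true) ∈ Z.image (fun q => (q.1, decide (q.1 ∉ L))) :=
      (mem_imageZ hZf L j true).mpr ⟨hA j hjA, by simp [hjL]⟩
    have h2 := (hb j).1 ht
    simp only [if_neg hjL, sub_zero] at h2
    linarith

lemma idealShift {n : ℕ} {M : Set (Fin n → ℤ)} (hM : IsMonomialIdeal ∅ M)
    {A : Finset (Fin n)} {b : Fin n → ℤ} {k : ℕ} (hb : b + (k : ℤ) • fVec A ∈ M)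
    (m : ℕ) : b + ((k + m : ℕ) : ℤ) • fVec A ∈ M := by
  have hc : (m : ℤ) • fVec A ∈ SfMon ∅ := by
    intro j _
    by_cases h : j ∈ A <;> simp [fVec, h]
  have hmem := hM.2 _ hb _ hc
  have heq : b + ((k + m : ℕ) : ℤ) • fVec A = b + (k : ℤ) • fVec A + (m : ℤ) • fVec A := by
    push_cast
    rw [add_smul, add_assoc]
  rw [heq]; exact hmem

lemma idealShift' {n : ℕ} {M : Set (Fin n → ℤ)} (hM : IsMonomialIdeal ∅ M)
    {A : Finset (Fin n)} {b : Fin n → ℤ} {k : ℕ} (hb : b + (k : ℤ) • fVec A ∈ M)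
    {k' : ℕ} (h : k ≤ k') : b + (k' : ℤ) • fVec A ∈ M := by
  obtain ⟨m, rfl⟩ := Nat.exists_eq_add_of_le h
  exact idealShift hM hb m

/-- Localization of a Stanley decomposition: if `D : I/J = ⊕_{i=1}^r u_i K[Z_i]` is a
Stanley decomposition of `I/J` for monomial ideals `J ⊂ I ⊂ S` (ambient parameter `A = ∅`),
then `D_f : (I/J)_f = ⊕_{i ∈ C} ⊕_{L ⊆ A} u_i f_L⁻¹ K[Z_i^L]` is a Stanley decomposition
of `(I/J)_f`, where `C = {i : {x_j : j ∈ A} ⊆ Z_i}` and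
`Z_i^L = {x_l⁻¹ : l ∈ L, x_l ∈ Z_i} ∪ {x_l : l ∉ L, x_l ∈ Z_i}`. -/
theorem stanley_decomposition_localization {n : ℕ} (A : Finset (Fin n))
    (I J : Set (Fin n → ℤ))
    (hI : IsMonomialIdeal (∅ : Finset (Fin n)) I) (hJ : IsMonomialIdeal ∅ J) (hJI : J ⊂ I)
    {r : ℕ} (u : Fin r → Fin n → ℤ) (Z : Fin r → Finset (Fin n × Bool))
    (hD : IsStanleyDecompOn ∅ (I \ J) u Z) :
    IsStanleyDecompOn A (locSet A I \ locSet A J)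
      (fun p : {q : Fin r × Finset (Fin n) // (∀ j ∈ A, (j, true) ∈ Z q.1) ∧ q.2 ⊆ A} =>
        fun i => u p.1.1 i - if i ∈ p.1.2 then 1 else 0)
      (fun p : {q : Fin r × Finset (Fin n) // (∀ j ∈ A, (j, true) ∈ Z q.1) ∧ q.2 ⊆ A} =>
        (Z p.1.1).image fun q => (q.1, decide (q.1 ∉ p.1.2))) := by
  obtain ⟨hfin, hZok, hdisj, hun⟩ := hD
  have hZf : ∀ (i : Fin r) (j : Fin n), (j, false) ∉ Z i := fun i j h =>
    absurd ((hZok i).1 j h) (Finset.notMem_empty j)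
  have hu0 : ∀ (i : Fin r) (j : Fin n), 0 ≤ u i j := by
    intro i j
    have hself : u i ∈ stanleySet (u i) (Z i) := by
      intro l
      exact ⟨fun _ => le_rfl, fun _ => le_rfl, fun _ _ => rfl⟩
    have hmem : u i ∈ I \ J := hun ▸ Set.mem_iUnion.mpr ⟨i, hself⟩
    exact hI.1 hmem.1 j (Finset.notMem_empty j)
  refine ⟨inferInstance, ?_, ?_, ?_⟩
  · rintro ⟨⟨i, L⟩, hC, hL⟩
    constructor
    · intro j hj
      obtain ⟨-, hdec⟩ := (mem_imageZ (hZf i) L j false).mp hj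
      exact hL (by simpa using hdec.symm)
    · intro j h
      obtain ⟨h1, h2⟩ := h
      obtain ⟨-, hd1⟩ := (mem_imageZ (hZf i) L j true).mp h1
      obtain ⟨-, hd2⟩ := (mem_imageZ (hZf i) L j false).mp h2
      exact absurd (hd1.trans hd2.symm) (by simp)
  · rintro ⟨⟨i, L⟩, hC, hL⟩ ⟨⟨i', L'⟩, hC', hL'⟩ hne
    rw [Set.disjoint_left]
    intro b hb hb'
    apply hne
    obtain ⟨ka, hka⟩ := exists_bound A (u i) b
    obtain ⟨kb, hkb⟩ := exists_bound A (u i') b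
    have hk1 : ∀ j ∈ A, u i j ≤ b j + ((ka ⊔ kb : ℕ) : ℤ) := bound_mono hka le_sup_left
    have hk2 : ∀ j ∈ A, u i' j ≤ b j + ((ka ⊔ kb : ℕ) : ℤ) := bound_mono hkb le_sup_right
    set k := ka ⊔ kb with hkdef
    have m1 : b + (k : ℤ) • fVec A ∈ stanleySet (u i) (Z i) :=
      lemA (hZf i) hC hL hb k hk1
    have m2 : b + (k : ℤ) • fVec A ∈ stanleySet (u i') (Z i') :=
      lemA (hZf i') hC' hL' hb' k hk2
    have hii : i = i' := by
      by_contra h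
      exact Set.disjoint_left.mp (hdisj h) m1 m2
    subst hii
    have hLL : L = L' := (lemC (hZf i) hC hL hb).trans (lemC (hZf i) hC' hL' hb').symm
    subst hLL
    rfl
  · ext b
    simp only [Set.mem_iUnion, Set.mem_diff, locSet, Set.mem_setOf_eq]
    constructor
    · rintro ⟨⟨⟨i, L⟩, hC, hL⟩, hb⟩
      have hb' : b ∈ stanleySet (fun j => u i j - if j ∈ L then 1 else 0)
          ((Z i).image fun q => (q.1, decide (q.1 ∉ L))) := hb
      have hSf : b ∈ SfMon A := by
        intro j hjA
        simp only [stanleySet, Set.mem_setOf_eq] at hb'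
        have hbj := hb' j
        have hjL : j ∉ L := fun h => hjA (hL h)
        by_cases hz : (j, true) ∈ Z i
        · have h1 : (j, true) ∈ (Z i).image (fun q => (q.1, decide (q.1 ∉ L))) :=
            (mem_imageZ (hZf i) L j true).mpr ⟨hz, by simp [hjL]⟩
          have h2 := hbj.1 h1
          simp only [if_neg hjL, sub_zero] at h2
          linarith [hu0 i j]
        · have hnot : (j, true) ∉ (Z i).image (fun q => (q.1, decide (q.1 ∉ L))) := by
            intro h; exact hz ((mem_imageZ (hZf i) L j true).mp h).1
          have hnot' : (j, false) ∉ (Z i).image (fun q => (q.1, decide (q.1 ∉ L))) := by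
            intro h; exact hz ((mem_imageZ (hZf i) L j false).mp h).1
          have h2 := hbj.2.2 hnot hnot'
          simp only [if_neg hjL, sub_zero] at h2
          rw [h2]; exact hu0 i j
      obtain ⟨k, hk1⟩ := exists_bound A (u i) b
      have hmem : b + (k : ℤ) • fVec A ∈ stanleySet (u i) (Z i) :=
        lemA (hZf i) hC hL hb' k hk1
      have hIJ : b + (k : ℤ) • fVec A ∈ I \ J := hun ▸ Set.mem_iUnion.mpr ⟨i, hmem⟩
      refine ⟨⟨hSf, k, hIJ.1⟩, ?_⟩
      rintro ⟨-, k0, hk0⟩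
      have hinJ : b + ((k ⊔ k0 : ℕ) : ℤ) • fVec A ∈ J := idealShift' hJ hk0 le_sup_right
      have hk1' : ∀ j ∈ A, u i j ≤ b j + ((k ⊔ k0 : ℕ) : ℤ) := bound_mono hk1 le_sup_left
      have hmem' : b + ((k ⊔ k0 : ℕ) : ℤ) • fVec A ∈ stanleySet (u i) (Z i) :=
        lemA (hZf i) hC hL hb' (k ⊔ k0) hk1'
      have hIJ' : b + ((k ⊔ k0 : ℕ) : ℤ) • fVec A ∈ I \ J :=
        hun ▸ Set.mem_iUnion.mpr ⟨i, hmem'⟩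
      exact hIJ'.2 hinJ
    · rintro ⟨⟨hSf, k0, hk0⟩, hnJ⟩
      have hnJ' : ∀ k : ℕ, b + (k : ℤ) • fVec A ∉ J := by
        intro k hk
        exact hnJ ⟨hSf, k, hk⟩
      have hmem : ∀ m : ℕ, ∃ i : Fin r,
          b + ((k0 + m : ℕ) : ℤ) • fVec A ∈ stanleySet (u i) (Z i) := by
        intro m
        have hI' : b + ((k0 + m : ℕ) : ℤ) • fVec A ∈ I := idealShift hI hk0 m
        have hd : b + ((k0 + m : ℕ) : ℤ) • fVec A ∈ I \ J := ⟨hI', hnJ' _⟩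
        rw [← hun] at hd
        exact Set.mem_iUnion.mp hd
      choose g hg using hmem
      obtain ⟨m1, m2, hne, heq⟩ := Fintype.exists_ne_map_eq_of_card_lt
        (fun m : Fin (r + 1) => g m) (by simp)
      have key : ∀ m1 m2 : Fin (r + 1), (m1 : ℕ) < (m2 : ℕ) → g m1 = g m2 →
          ∀ j ∈ A, (j, true) ∈ Z (g m1) := by
        intro m1 m2 hlt heq j hj
        by_contra hz
        have h1 := hg (m1 : ℕ)
        have h2 := hg (m2 : ℕ)
        rw [← heq] at h2
        simp only [stanleySet, Set.mem_setOf_eq] at h1 h2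
        have e1 := (h1 j).2.2 hz (hZf _ j)
        have e2 := (h2 j).2.2 hz (hZf _ j)
        have hfj : fVec A j = 1 := by simp [fVec, hj]
        simp only [Pi.add_apply, Pi.smul_apply, smul_eq_mul, hfj, mul_one] at e1 e2
        have hc : ((k0 + (m1 : ℕ) : ℕ) : ℤ) = ((k0 + (m2 : ℕ) : ℕ) : ℤ) := by linarith
        omega
      obtain ⟨i, hC, m, hmm⟩ : ∃ i : Fin r, (∀ j ∈ A, (j, true) ∈ Z i) ∧
          ∃ m : ℕ, b + ((k0 + m : ℕ) : ℤ) • fVec A ∈ stanleySet (u i) (Z i) := by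
        rcases (Ne.lt_or_gt hne) with hlt | hlt
        · exact ⟨g m1, key m1 m2 hlt heq, m1, hg m1⟩
        · exact ⟨g m2, key m2 m1 hlt heq.symm, m2, hg m2⟩
      exact ⟨⟨(i, A.filter fun l => b l < u i l), hC, Finset.filter_subset _ _⟩,
        lemB (hZf i) hC _ hmm⟩
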